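/- Let $S$, $A$, $M$ be real symmetric $p\times p$ matrices and $\mu>0$, and set $K=\mu A - S - M$. Then $\Theta^{\star} := \dfrac{K+\sqrt{K^2+4\mu I}}{2\mu}$ is the unique minimizer over the set of real symmetric positive definite $p\times p$ matrices $\Theta$ of the function $\mathcal{L}(\Theta) = -\log\det\Theta + \mathrm{tr}(S\Theta) + \mathrm{tr}\big(M^T(\Theta-A)\big) + \tfrac{\mu}{2}\|\Theta-A\|_F^2$. -/

import Mathlib

open Matrix

set_option linter.unusedSectionVars false
set_option linter.unnecessarySimpa false
set_option maxHeartbeats 1000000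

/-- The Frobenius norm of a real square matrix. -/
noncomputable def frobeniusNorm {p : ℕ} (A : Matrix (Fin p) (Fin p) ℝ) : ℝ :=
  Real.sqrt (∑ i, ∑ j, (A i j) ^ 2)

/-- The positive semidefinite square root of a positive semidefinite matrix (removed from
Mathlib; restored here with its December 2024 definition). -/
noncomputable def Matrix.PosSemidef.sqrt {n : Type*} [Fintype n] [DecidableEq n]
    {A : Matrix n n ℝ} (hA : A.PosSemidef) : Matrix n n ℝ :=
  hA.1.eigenvectorUnitary.1 * diagonal ((↑) ∘ (√·) ∘ hA.1.eigenvalues) *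
  (star hA.1.eigenvectorUnitary : Matrix n n ℝ)


variable {n : Type*} [Fintype n] [DecidableEq n]

lemma herm_transpose_eq {A : Matrix n n ℝ} (hA : A.IsHermitian) : Aᵀ = A := by
  exact (conjTranspose_eq_transpose_of_trivial A).symm.trans hA.eq

lemma posDef_conj_mul {A B : Matrix n n ℝ} (hA : A.PosDef) (hB : IsUnit B) :
    (B * A * Bᴴ).PosDef := by
  have hBH : IsUnit Bᴴ := by
    rw [Matrix.isUnit_iff_isUnit_det] at hB ⊢
    simpa [Matrix.det_conjTranspose] using hB
  exact hA.mul_mul_conjTranspose_same (Matrix.vecMul_injective_iff_isUnit.mpr hB)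

lemma log_det_le_trace {B : Matrix n n ℝ} (hB : B.PosDef) :
    Real.log B.det ≤ B.trace - Fintype.card n := by
  have hdet : B.det = ∏ i, hB.1.eigenvalues i := by
    simpa using hB.1.det_eq_prod_eigenvalues
  have htr : B.trace = ∑ i, hB.1.eigenvalues i := by
    simpa using hB.1.trace_eq_sum_eigenvalues
  rw [hdet, htr, Real.log_prod (fun i _ => (hB.eigenvalues_pos i).ne')]
  calc ∑ i, Real.log (hB.1.eigenvalues i)
      ≤ ∑ i, (hB.1.eigenvalues i - 1) :=
        Finset.sum_le_sum fun i _ => Real.log_le_sub_one_of_pos (hB.eigenvalues_pos i)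
    _ = (∑ i, hB.1.eigenvalues i) - Fintype.card n := by
        rw [Finset.sum_sub_distrib]; simp [Finset.card_univ]

section conj
variable {n : Type*} [Fintype n] [DecidableEq n]
variable (U : Matrix n n ℝ)

noncomputable def cj (f : n → ℝ) : Matrix n n ℝ := U * diagonal f * star U

lemma cj_mul (hU : U ∈ Matrix.unitaryGroup n ℝ) (f g : n → ℝ) :
    cj U f * cj U g = cj U (f * g) := by
  have h1 : star U * U = 1 := mem_unitaryGroup_iff'.mp hU
  simp only [cj, Matrix.mul_assoc]
  rw [← Matrix.mul_assoc (star U) U, h1, Matrix.one_mul,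
    ← Matrix.mul_assoc (diagonal f), diagonal_mul_diagonal]
  rfl

lemma cj_add (f g : n → ℝ) : cj U f + cj U g = cj U (f + g) := by
  have : diagonal (f + g) = diagonal f + diagonal g := by
    rw [diagonal_add]; rfl
  rw [cj, cj, cj, this, Matrix.mul_add, Matrix.add_mul]

lemma cj_smul (c : ℝ) (f : n → ℝ) : c • cj U f = cj U (c • f) := by
  rw [cj, cj, diagonal_smul, Matrix.mul_smul, Matrix.smul_mul]

lemma cj_one (hU : U ∈ Matrix.unitaryGroup n ℝ) : cj U 1 = 1 := by
  have h1 : U * star U = 1 := mem_unitaryGroup_iff.mp hU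
  rw [cj, show diagonal (1 : n → ℝ) = 1 from Matrix.diagonal_one, Matrix.mul_one]
  exact h1

lemma cj_hermitian (f : n → ℝ) : (cj U f).IsHermitian := by
  have : (diagonal f).IsHermitian := isHermitian_diagonal f
  unfold cj; rw [star_eq_conjTranspose]
  simpa only [conjTranspose_conjTranspose] using isHermitian_conjTranspose_mul_mul Uᴴ this

lemma cj_posSemidef {f : n → ℝ} (hf : ∀ i, 0 ≤ f i) : (cj U f).PosSemidef := by
  have : (diagonal f).PosSemidef := posSemidef_diagonal_iff.mpr hf
  simpa [cj, star_eq_conjTranspose] using this.mul_mul_conjTranspose_same U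

lemma cj_posDef (hU : U ∈ Matrix.unitaryGroup n ℝ) {f : n → ℝ} (hf : ∀ i, 0 < f i) :
    (cj U f).PosDef := by
  have hd : (diagonal f).PosDef := posDef_diagonal_iff.mpr hf
  have hUu : IsUnit U := by
    have h1 : U * star U = 1 := mem_unitaryGroup_iff.mp hU
    have : IsUnit U.det := IsUnit.of_mul_eq_one (star U).det
      (by rw [← Matrix.det_mul, h1, Matrix.det_one])
    exact (Matrix.isUnit_iff_isUnit_det U).2 this
  simpa [cj, star_eq_conjTranspose] using posDef_conj_mul hd hUu

end conj

lemma cfc_cj {n : Type*} [Fintype n] [DecidableEq n] {X : Matrix n n ℝ} (hX : X.IsHermitian)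
    (f : ℝ → ℝ) : cfc f X = cj (hX.eigenvectorUnitary : Matrix n n ℝ) (f ∘ hX.eigenvalues) := by
  rw [hX.cfc_eq, IsHermitian.cfc, Unitary.conjStarAlgAut_apply]
  simp only [cj, RCLike.ofReal_real_eq_id, Function.id_comp]

lemma herm_cj {n : Type*} [Fintype n] [DecidableEq n] {X : Matrix n n ℝ} (hX : X.IsHermitian) :
    X = cj (hX.eigenvectorUnitary : Matrix n n ℝ) hX.eigenvalues := by
  have h := cfc_id ℝ X (hX : IsSelfAdjoint X)
  rw [cfc_cj hX] at h
  exact h.symm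

namespace Matrix.PosSemidef

lemma sqrt_eq_cfc {n : Type*} [Fintype n] [DecidableEq n] {A : Matrix n n ℝ}
    (hA : A.PosSemidef) : hA.sqrt = cfc Real.sqrt A := by
  rw [cfc_cj hA.1]
  rfl

lemma eq_sqrt_of_sq_eq {n : Type*} [Fintype n] [DecidableEq n] {A : Matrix n n ℝ}
    (hA : A.PosSemidef) (B : Matrix n n ℝ) (hB : B.PosSemidef) (hAB : A ^ 2 = B) :
    A = hB.sqrt := by
  have hA' : IsSelfAdjoint A := hA.1
  rw [sqrt_eq_cfc hB, ← hAB, ← cfc_pow_id (R := ℝ) A 2 hA', ← cfc_comp Real.sqrt (fun x : ℝ => x ^ 2) A hA']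
  calc A = cj (hA.1.eigenvectorUnitary : Matrix n n ℝ) hA.1.eigenvalues := herm_cj hA.1
    _ = cj (hA.1.eigenvectorUnitary : Matrix n n ℝ)
        ((Real.sqrt ∘ (fun x => x ^ 2)) ∘ hA.1.eigenvalues) := by
      congr 1; funext i
      simp [Real.sqrt_sq (hA.eigenvalues_nonneg i)]
    _ = cfc (Real.sqrt ∘ (fun x => x ^ 2)) A := (cfc_cj hA.1 _).symm

lemma sqrt_mul_self {n : Type*} [Fintype n] [DecidableEq n] {A : Matrix n n ℝ}
    (hA : A.PosSemidef) : hA.sqrt * hA.sqrt = A := by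
  rw [sqrt_eq_cfc, cfc_cj hA.1, cj_mul _ hA.1.eigenvectorUnitary.2]
  conv_rhs => rw [herm_cj hA.1]
  congr 1; funext i
  simp [Real.mul_self_sqrt (hA.eigenvalues_nonneg i)]

lemma posSemidef_sqrt {n : Type*} [Fintype n] [DecidableEq n] {A : Matrix n n ℝ}
    (hA : A.PosSemidef) : hA.sqrt.PosSemidef := by
  rw [sqrt_eq_cfc, cfc_cj hA.1]
  exact cj_posSemidef _ (fun i => Real.sqrt_nonneg _)

end Matrix.PosSemidef



lemma cj_sub {n : Type*} [Fintype n] [DecidableEq n] (U : Matrix n n ℝ) (f g : n → ℝ) :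
    cj U f - cj U g = cj U (f - g) := by
  have : diagonal (f - g) = diagonal f - diagonal g := by
    ext i j; by_cases h : i = j <;> simp [diagonal, h]
  rw [cj, cj, cj, this, Matrix.mul_sub, Matrix.sub_mul]

lemma trace_transpose_mul_self {p : ℕ} (X : Matrix (Fin p) (Fin p) ℝ) :
    (Xᵀ * X).trace = ∑ i, ∑ j, (X i j) ^ 2 := by
  rw [Matrix.trace]
  simp only [Matrix.diag, Matrix.mul_apply, Matrix.transpose_apply]
  rw [Finset.sum_comm]
  simp [sq]

lemma frob_sq {p : ℕ} (X : Matrix (Fin p) (Fin p) ℝ) :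
    frobeniusNorm X ^ 2 = (Xᵀ * X).trace := by
  rw [frobeniusNorm, Real.sq_sqrt (by positivity), trace_transpose_mul_self]

/-- The `Θ`-update of the split Bregman iteration: with `K = μ A - S - M`, the
matrix `Θ⋆ = (K + √(K ^ 2 + 4μ I)) / (2μ)` is the unique minimizer, over
symmetric positive definite matrices, of the augmented Lagrangian
`Θ ↦ -log det Θ + tr (S Θ) + tr (Mᵀ (Θ - A)) + (μ / 2) ‖Θ - A‖_F ^ 2`.
The hypothesis `hP` is automatically satisfied since `K = μ A - S - M` is
symmetric and `μ > 0`. -/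
theorem theta_update_is_unique_minimizer (p : ℕ)
    (S A M : Matrix (Fin p) (Fin p) ℝ)
    (hS : S.IsHermitian) (hA : A.IsHermitian) (hM : M.IsHermitian)
    (μ : ℝ) (hμ : 0 < μ) (K : Matrix (Fin p) (Fin p) ℝ) (hKdef : K = μ • A - S - M)
    (hP : (K ^ 2 + (4 * μ) • (1 : Matrix (Fin p) (Fin p) ℝ)).PosSemidef)
    (L : Matrix (Fin p) (Fin p) ℝ → ℝ)
    (hL : ∀ Θ, L Θ = -Real.log Θ.det + (S * Θ).trace + (Mᵀ * (Θ - A)).trace +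
      μ / 2 * frobeniusNorm (Θ - A) ^ 2) :
    ((2 * μ)⁻¹ • (K + hP.sqrt)).PosDef ∧
      ∀ Θ : Matrix (Fin p) (Fin p) ℝ, Θ.PosDef → Θ ≠ (2 * μ)⁻¹ • (K + hP.sqrt) →
        L ((2 * μ)⁻¹ • (K + hP.sqrt)) < L Θ := by
  classical
  have hK : K.IsHermitian := by
    rw [hKdef]
    simp only [Matrix.IsHermitian, conjTranspose_sub, conjTranspose_smul, star_trivial,
      hA.eq, hS.eq, hM.eq]
  set U : Matrix (Fin p) (Fin p) ℝ := (hK.eigenvectorUnitary : Matrix (Fin p) (Fin p) ℝ) with hUdef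
  have hU : U ∈ Matrix.unitaryGroup (Fin p) ℝ := hK.eigenvectorUnitary.2
  set d : Fin p → ℝ := hK.eigenvalues with hddef
  have hKcj : K = cj U d := by
    conv_lhs => rw [hK.spectral_theorem]
    rw [cj, RCLike.ofReal_real_eq_id, Function.id_comp]
    rw [Unitary.conjStarAlgAut_apply]
  set s : Fin p → ℝ := fun i => Real.sqrt (d i ^ 2 + 4 * μ) with hsdef
  have hs_sq : ∀ i, s i * s i = d i ^ 2 + 4 * μ := fun i =>
    Real.mul_self_sqrt (by positivity)
  have hds : ∀ i, -d i < s i := by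
    intro i
    have h1 : |d i| < s i := by
      rw [← Real.sqrt_sq_eq_abs]
      exact Real.sqrt_lt_sqrt (sq_nonneg _) (by linarith)
    calc -d i ≤ |d i| := neg_le_abs _
      _ < s i := h1
  have hs_pos : ∀ i, 0 ≤ s i := fun i => Real.sqrt_nonneg _
  have hsqrt : hP.sqrt = cj U s := by
    symm
    apply Matrix.PosSemidef.eq_sqrt_of_sq_eq (cj_posSemidef U hs_pos)
    have h4 : (4 * μ) • (1 : Matrix (Fin p) (Fin p) ℝ) = cj U ((4 * μ) • (1 : Fin p → ℝ)) := by
      rw [← cj_smul, cj_one U hU]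
    rw [pow_two, cj_mul U hU, hKcj, pow_two, cj_mul U hU, h4, cj_add]
    have hfun : (s * s) = (d * d + (4 * μ) • (1 : Fin p → ℝ)) := by
      funext i
      simp only [Pi.mul_apply, Pi.add_apply, Pi.smul_apply, Pi.one_apply, smul_eq_mul, mul_one]
      rw [hs_sq i]; ring
    rw [hfun]
  set g : Fin p → ℝ := fun i => (2 * μ)⁻¹ * (d i + s i) with hgdef
  set T : Matrix (Fin p) (Fin p) ℝ := (2 * μ)⁻¹ • (K + hP.sqrt) with hTdef
  have hTg : T = cj U g := by
    rw [hTdef, hsqrt, hKcj, cj_add, cj_smul]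
    have hfun : (2 * μ)⁻¹ • (d + s) = g := by
      funext i
      simp only [hgdef, Pi.smul_apply, Pi.add_apply, smul_eq_mul]
    rw [hfun]
  have hg_pos : ∀ i, 0 < g i := by
    intro i
    have := hds i
    have h2 : (0:ℝ) < (2*μ)⁻¹ := by positivity
    exact mul_pos h2 (by linarith)
  have hT : T.PosDef := by rw [hTg]; exact cj_posDef U hU hg_pos
  have hTinv_eq : T * (μ • T - K) = 1 := by
    have hsub : μ • T - K = cj U (μ • g - d) := by
      rw [hTg, hKcj, cj_smul, cj_sub]
    rw [hsub, hTg, cj_mul U hU]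
    have hfun : g * (μ • g - d) = 1 := by
      funext i
      simp only [Pi.mul_apply, Pi.sub_apply, Pi.smul_apply, smul_eq_mul, Pi.one_apply, hgdef]
      have h1 := hs_sq i
      field_simp
      nlinarith [h1]
    rw [hfun, cj_one U hU]
  have hTdet : IsUnit T.det := (Matrix.isUnit_iff_isUnit_det T).mp hT.isUnit
  have hTinv : T⁻¹ = μ • T - K := Matrix.inv_eq_right_inv hTinv_eq
  have hinv2 : T⁻¹ = S + M + μ • (T - A) := by
    rw [hTinv, hKdef, smul_sub]
    abel
  constructor
  · exact hT
  · intro Θ hΘ hne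
    rw [← sub_pos]
    set Δ : Matrix (Fin p) (Fin p) ℝ := Θ - T with hΔdef
    have hΔne : Δ ≠ 0 := sub_ne_zero.mpr hne
    have hΔt : Δᵀ = Δ := by
      rw [hΔdef, transpose_sub, herm_transpose_eq hΘ.1, herm_transpose_eq hT.1]
    have hCt : (T - A)ᵀ = T - A := by
      rw [transpose_sub, herm_transpose_eq hT.1, herm_transpose_eq hA]
    have hMt : Mᵀ = M := herm_transpose_eq hM
    -- expansion
    have e1 : ((Θ - A)ᵀ * (Θ - A)).trace
        = (Δᵀ * Δ).trace + 2 * (((T - A) * Δ).trace) + ((T - A)ᵀ * (T - A)).trace := by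
      have hΘA : Θ - A = Δ + (T - A) := by rw [hΔdef]; abel
      rw [hΘA, transpose_add, Matrix.add_mul, Matrix.mul_add, Matrix.mul_add,
        trace_add, trace_add, trace_add, hΔt, hCt]
      have hcomm : (Δ * (T - A)).trace = ((T - A) * Δ).trace := trace_mul_comm _ _
      rw [hcomm]; ring
    have htr1 : (T⁻¹ * T).trace = (p : ℝ) := by
      rw [Matrix.nonsing_inv_mul T hTdet]
      simp [Matrix.trace_one]
    have e2 : (T⁻¹ * Θ).trace - (p : ℝ)
        = (S * Δ).trace + (M * Δ).trace + μ * (((T - A) * Δ).trace) := by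
      have h1 : (T⁻¹ * Δ).trace = (T⁻¹ * Θ).trace - (T⁻¹ * T).trace := by
        rw [hΔdef, Matrix.mul_sub, trace_sub]
      have h2 : (T⁻¹ * Δ).trace
          = (S * Δ).trace + (M * Δ).trace + μ * (((T - A) * Δ).trace) := by
        rw [hinv2, Matrix.add_mul, Matrix.add_mul, Matrix.smul_mul, trace_add, trace_add,
          trace_smul, smul_eq_mul]
      linarith [h1, h2, htr1]
    have e3 : (Mᵀ * (Θ - A)).trace - (Mᵀ * (T - A)).trace = (M * Δ).trace := by
      rw [hMt, ← trace_sub, ← Matrix.mul_sub]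
      congr 2
      rw [hΔdef]; abel
    have e4 : (S * Θ).trace - (S * T).trace = (S * Δ).trace := by
      rw [← trace_sub, ← Matrix.mul_sub, hΔdef]
    have key : L Θ - L T = (Real.log T.det - Real.log Θ.det + ((T⁻¹ * Θ).trace - p))
        + μ / 2 * ((Δᵀ * Δ).trace) := by
      rw [hL Θ, hL T, frob_sq, frob_sq]
      linear_combination e3 + e4 + (μ/2) * e1 - e2
    -- bracket nonneg
    have hbracket : 0 ≤ Real.log T.det - Real.log Θ.det + ((T⁻¹ * Θ).trace - p) := by
      have hTinvPD : T⁻¹.PosDef := hT.inv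
      set W : Matrix (Fin p) (Fin p) ℝ := hTinvPD.posSemidef.sqrt with hWdef
      have hW2 : W * W = T⁻¹ := hTinvPD.posSemidef.sqrt_mul_self
      have hWH : W.IsHermitian := hTinvPD.posSemidef.posSemidef_sqrt.1
      have hdetTinv : (0:ℝ) < (T⁻¹).det := hTinvPD.det_pos
      have hWdet : W.det ≠ 0 := by
        intro h
        rw [← hW2, Matrix.det_mul, h, mul_zero] at hdetTinv
        exact lt_irrefl _ hdetTinv
      have hWunit : IsUnit W := (Matrix.isUnit_iff_isUnit_det W).mpr hWdet.isUnit
      have hB : (W * Θ * W).PosDef := by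
        have := posDef_conj_mul hΘ hWunit
        rwa [hWH.eq] at this
      have hlog := log_det_le_trace hB
      have htrB : (W * Θ * W).trace = (T⁻¹ * Θ).trace := by
        rw [trace_mul_cycle, hW2]
      have hdetB : (W * Θ * W).det = (T⁻¹).det * Θ.det := by
        rw [Matrix.det_mul, Matrix.det_mul]
        rw [← hW2, Matrix.det_mul]
        ring
      have hdetT : (0:ℝ) < T.det := hT.det_pos
      have hdetΘ : (0:ℝ) < Θ.det := hΘ.det_pos
      have hTinvdet : (T⁻¹).det = (T.det)⁻¹ := by
        rw [Matrix.det_nonsing_inv, Ring.inverse_eq_inv]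
      have hlogB : Real.log (W * Θ * W).det = Real.log Θ.det - Real.log T.det := by
        rw [hdetB, hTinvdet, Real.log_mul (by positivity) hdetΘ.ne', Real.log_inv]
        ring
      rw [hlogB, htrB] at hlog
      simp only [Fintype.card_fin] at hlog
      linarith
    -- quadratic positive
    have hquad : 0 < (Δᵀ * Δ).trace := by
      rw [trace_transpose_mul_self]
      obtain ⟨i, j, hij⟩ : ∃ i j, Δ i j ≠ 0 := by
        by_contra h
        push_neg at h
        exact hΔne (by ext i j; simpa using h i j)
      refine Finset.sum_pos' (fun i _ => Finset.sum_nonneg fun j _ => sq_nonneg _)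
        ⟨i, Finset.mem_univ i, Finset.sum_pos'
          (fun j _ => sq_nonneg _) ⟨j, Finset.mem_univ j, pow_two_pos_of_ne_zero hij⟩⟩
    rw [key]
    have : 0 < μ / 2 * (Δᵀ * Δ).trace := by positivity
    linarith
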